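/- The joint nearest selector P(y, x) := P_y(x) is locally Lipschitz on (Y × K̄) \ ℬ. -/

import Mathlib

open Filter Topology MeasureTheory Set Metric Bornology RealInnerProductSpace
open scoped ENNReal NNReal

noncomputable section

namespace Bif

abbrev Xs (d : ℕ) : Type := EuclideanSpace ℝ (Fin d)
abbrev Ys (m : ℕ) : Type := EuclideanSpace ℝ (Fin m)
abbrev Zs (m d : ℕ) : Type := WithLp 2 (Ys m × Xs d)

variable {d m n : ℕ}

/-- The point `(y, x)` in `Y × ℝ^d` equipped with the product Euclidean (ℓ²) norm. -/
def ptYX (y : Ys m) (x : Xs d) : Zs m d := (WithLp.equiv 2 (Ys m × Xs d)).symm (y, x)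

def projY (p : Zs m d) : Ys m := ((WithLp.equiv 2 (Ys m × Xs d)) p).1

def projX (p : Zs m d) : Xs d := ((WithLp.equiv 2 (Ys m × Xs d)) p).2

/-- `f` is locally Lipschitz on `s`: every point of `s` has a relative
neighborhood on which `f` is Lipschitz. -/
def LocLipOn {α β : Type*} [PseudoEMetricSpace α] [PseudoEMetricSpace β]
    (s : Set α) (f : α → β) : Prop :=
  ∀ x ∈ s, ∃ C : NNReal, ∃ t ∈ 𝓝[s] x, LipschitzOnWith C f t

/-- The solution set `F(x) = {f_1(x), …, f_n(x)}`. -/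
def Fset (f : Fin n → Xs d → Ys m) (x : Xs d) : Set (Ys m) :=
  Set.range fun i => f i x

/-- The reduced Voronoi switching set `Σ°(x)`. -/
def Sigma0 (f : Fin n → Xs d → Ys m) (x : Xs d) : Set (Ys m) :=
  {y | ∃ i j : Fin n, f i x ≠ f j x ∧ ‖y - f i x‖ = ‖y - f j x‖ ∧
        ∀ k, ‖y - f i x‖ ≤ ‖y - f k x‖}

/-- The graph-closure switching set `Σ̃(x₀)`: the graph of `Σ̃` is the closure of
the graph of `Σ°` (over base points in `K`). -/
def SigmaTilde (K : Set (Xs d)) (f : Fin n → Xs d → Ys m) (x0 : Xs d) : Set (Ys m) :=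
  {y | (x0, y) ∈ closure {p : Xs d × Ys m | p.1 ∈ K ∧ p.2 ∈ Sigma0 f p.1}}

/-- `x₀` has a stable collapse pattern: on a relative neighborhood `U ⊆ K` of `x₀`
there is a partition (equivalence relation) of the branch indices such that two
branches agree at a point of `U` iff they lie in the same cluster. -/
def StableAt (K : Set (Xs d)) (f : Fin n → Xs d → Ys m) (x0 : Xs d) : Prop :=
  ∃ U ∈ 𝓝[K] x0, U ⊆ K ∧ ∃ R : Fin n → Fin n → Prop, Equivalence R ∧
    ∀ x ∈ U, ∀ i j : Fin n, (f i x = f j x ↔ R i j)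

/-- The unstable collapse set `𝒰 = K \ S`. -/
def Unstable (K : Set (Xs d)) (f : Fin n → Xs d → Ys m) : Set (Xs d) :=
  {x ∈ K | ¬ StableAt K f x}

/-- `P` is the priority nearest selector: `P y x = f i x` where `i` is the
smallest index minimizing `‖y - f i x‖`. -/
def IsPrioritySelector (f : Fin n → Xs d → Ys m) (P : Ys m → Xs d → Ys m) : Prop :=
  ∀ (y : Ys m) (x : Xs d), ∃ i : Fin n, P y x = f i x ∧
    (∀ j, ‖y - f i x‖ ≤ ‖y - f j x‖) ∧
    (∀ j, (∀ k, ‖y - f j x‖ ≤ ‖y - f k x‖) → i ≤ j)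

/-- On `closure K \ K`, `f` takes the value of the limit of `f` along `K` when this
limit exists, and `0` otherwise (limit-or-zero extension of the branch maps). -/
def IsLimitExtension (K : Set (Xs d)) (f : Fin n → Xs d → Ys m) : Prop :=
  ∀ i : Fin n, ∀ x ∈ closure K \ K,
    Tendsto (f i) (𝓝[K] x) (𝓝 (f i x)) ∨
    ((¬ ∃ L : Ys m, Tendsto (f i) (𝓝[K] x) (𝓝 L)) ∧ f i x = 0)

/-- `𝒟`: the points of `closure K` at which some (extended) branch fails to be
locally Lipschitz. -/
def DSet (K : Set (Xs d)) (f : Fin n → Xs d → Ys m) : Set (Xs d) :=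
  {x ∈ closure K | ∃ i : Fin n,
    ¬ ∃ C : NNReal, ∃ t ∈ 𝓝[closure K] x, LipschitzOnWith C (f i) t}

/-- The joint bad set `ℬ ⊆ Y × closure K`. -/
def BadSet (K : Set (Xs d)) (f : Fin n → Xs d → Ys m) : Set (Zs m d) :=
  {p | projX p ∈ DSet K f ∪ closure (Unstable K f) ∨ projY p ∈ SigmaTilde K f (projX p)}

/-- `ρ(y, x) = dist((y, x), ℬ)` in the product Euclidean norm. -/
def rhoB (K : Set (Xs d)) (f : Fin n → Xs d → Ys m) (y : Ys m) (x : Xs d) : ℝ :=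
  Metric.infDist (ptYX y x) (BadSet K f)

/-- `ω(y, x) = ρ(y, x) / (1 + ρ(y, x))`. -/
def omegaB (K : Set (Xs d)) (f : Fin n → Xs d → Ys m) (y : Ys m) (x : Xs d) : ℝ :=
  rhoB K f y x / (1 + rhoB K f y x)

/-- The safe tube `𝒮(R, s)`. -/
def STube (K : Set (Xs d)) (f : Fin n → Xs d → Ys m) (R s : ℝ) : Set (Ys m × Xs d) :=
  {q | q.2 ∈ closure K ∧ ‖q.1‖ ≤ R ∧ s ≤ omegaB K f q.1 q.2}

/-- The set whose supremum is the safe-set profile `H₁(R, s)`. -/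
def H1set (K : Set (Xs d)) (f : Fin n → Xs d → Ys m) (P : Ys m → Xs d → Ys m)
    (R s : ℝ) : Set ℝ :=
  {r | ∃ y x z, (y, x) ∈ STube K f R s ∧ (y, z) ∈ STube K f R s ∧ x ≠ z ∧
       r = ‖P y x - P y z‖ / ‖x - z‖}

/-- The set whose supremum is the safe-set profile `H₂(R, s)`. -/
def H2set (K : Set (Xs d)) (f : Fin n → Xs d → Ys m) (P : Ys m → Xs d → Ys m)
    (R s : ℝ) : Set ℝ :=
  {r | ∃ y x, (y, x) ∈ STube K f R s ∧ r = ‖P y x‖}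

def H1 (K : Set (Xs d)) (f : Fin n → Xs d → Ys m) (P : Ys m → Xs d → Ys m) (R s : ℝ) : ℝ :=
  sSup (H1set K f P R s)

def H2 (K : Set (Xs d)) (f : Fin n → Xs d → Ys m) (P : Ys m → Xs d → Ys m) (R s : ℝ) : ℝ :=
  sSup (H2set K f P R s)

/-- `λ_R(s) = 1 / (H₁(R, s) + H₂(R, s) + 1)`. -/
def lamB (K : Set (Xs d)) (f : Fin n → Xs d → Ys m) (P : Ys m → Xs d → Ys m)
    (R s : ℝ) : ℝ :=
  1 / (H1 K f P R s + H2 K f P R s + 1)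

/-- `Θ_R(r) = ∫₀^r λ_R(s) ds`. -/
def ThetaB (K : Set (Xs d)) (f : Fin n → Xs d → Ys m) (P : Ys m → Xs d → Ys m)
    (R r : ℝ) : ℝ :=
  ∫ s in (0:ℝ)..r, lamB K f P R s

/-- The damping factor `η(y, x)`. -/
def etaB (K : Set (Xs d)) (f : Fin n → Xs d → Ys m) (P : Ys m → Xs d → Ys m)
    (y : Ys m) (x : Xs d) : ℝ :=
  ThetaB K f P (1 + ‖y‖) (omegaB K f y x) /
    (1 + ThetaB K f P (1 + ‖y‖) (omegaB K f y x))

/-- The recurrent operator `g(y, x) = (1 − η(y, x)) y + η(y, x) P_y(x)`. -/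
def gB (K : Set (Xs d)) (f : Fin n → Xs d → Ys m) (P : Ys m → Xs d → Ys m)
    (y : Ys m) (x : Xs d) : Ys m :=
  (1 - etaB K f P y x) • y + etaB K f P y x • P y x


section Aux

/-- Core geometric lemma: if the Voronoi switching set of the finite family of
values `g k` avoids the ball of radius `ρ` around `y`, and `g i` is a
`c`-near-minimizer while `g k₀` is a minimizer of the distance to `y`, then
`g i` and `g k₀` are quantitatively close. -/
lemma key {m n : ℕ} (g : Fin n → Ys m) (y : Ys m) (k₀ : Fin n)
    (hmin : ∀ k, ‖y - g k₀‖ ≤ ‖y - g k‖)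
    (ρ D c : ℝ) (hρ : 0 < ρ) (hc : 0 ≤ c)
    (hD : ∀ k, ‖y - g k‖ ≤ D)
    (hSig : ∀ z : Ys m, (∃ i j, g i ≠ g j ∧ ‖z - g i‖ = ‖z - g j‖ ∧
        ∀ k, ‖z - g i‖ ≤ ‖z - g k‖) → ¬ dist z y < ρ)
    (i : Fin n) (hi : ‖y - g i‖ ≤ ‖y - g k₀‖ + c) :
    ‖g i - g k₀‖ * ρ ≤ D * c := by
  have hD0 : 0 ≤ D := le_trans (norm_nonneg _) (hD k₀)
  by_cases hiv : g i = g k₀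
  · simp only [hiv, sub_self, norm_zero, zero_mul]
    positivity
  have hγ : (0:ℝ) < ‖g i - g k₀‖ := by
    rw [norm_pos_iff]
    exact sub_ne_zero.mpr hiv
  set γ : ℝ := ‖g i - g k₀‖ with hγdef
  set u : Ys m := γ⁻¹ • (g i - g k₀) with hudef
  have hu : ‖u‖ = 1 := by
    rw [hudef, norm_smul, norm_inv, norm_norm, ← hγdef, inv_mul_cancel₀ hγ.ne']
  have hid : ∀ t : ℝ, ‖(y + t • u) - g i‖ ^ 2 - ‖(y + t • u) - g k₀‖ ^ 2
      = (‖y - g i‖ ^ 2 - ‖y - g k₀‖ ^ 2) - 2 * t * γ := by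
    intro t
    have e1 : (y + t • u) - g i = (y - g i) + t • u := by abel
    have e2 : (y + t • u) - g k₀ = (y - g k₀) + t • u := by abel
    rw [e1, e2, norm_add_sq_real, norm_add_sq_real]
    have h1 : ⟪y - g i, t • u⟫ = t * (γ⁻¹ * ⟪y - g i, g i - g k₀⟫) := by
      rw [hudef, real_inner_smul_right, real_inner_smul_right]
    have h2 : ⟪y - g k₀, t • u⟫ = t * (γ⁻¹ * ⟪y - g k₀, g i - g k₀⟫) := by
      rw [hudef, real_inner_smul_right, real_inner_smul_right]
    have h3 : ⟪y - g i, g i - g k₀⟫ - ⟪y - g k₀, g i - g k₀⟫ = -γ ^ 2 := by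
      rw [← inner_sub_left]
      have e3 : (y - g i) - (y - g k₀) = -(g i - g k₀) := by abel
      rw [e3, inner_neg_left, real_inner_self_eq_norm_sq, ← hγdef]
    have hγγ : γ⁻¹ * γ ^ 2 = γ := by field_simp
    rw [h1, h2]
    linear_combination (2 * t * γ⁻¹) * h3 - 2 * t * hγγ
  set g0 : ℝ := ‖y - g i‖ ^ 2 - ‖y - g k₀‖ ^ 2 with hg0def
  have hg0 : 0 ≤ g0 := by nlinarith [hmin i, norm_nonneg (y - g k₀), norm_nonneg (y - g i)]
  have hg0' : g0 ≤ 2 * D * c := by nlinarith [hmin i, hD i, hD k₀, norm_nonneg (y - g k₀)]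
  set ts : ℝ := g0 / (2 * γ) with htsdef
  have hts0 : 0 ≤ ts := by positivity
  set A : Set ℝ := {t : ℝ | t ∈ Icc 0 ts ∧
      ∀ k, g k ≠ g k₀ → ‖(y + t • u) - g k₀‖ ≤ ‖(y + t • u) - g k‖} with hAdef
  have h0A : (0:ℝ) ∈ A := by
    constructor
    · exact ⟨le_refl _, hts0⟩
    · intro k _
      simpa using hmin k
  have hbdd : BddAbove A := ⟨ts, fun t ht => ht.1.2⟩
  have hcont : ∀ z : Ys m, Continuous fun t : ℝ => ‖(y + t • u) - z‖ := by
    intro z; fun_prop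
  have hclosed : IsClosed A := by
    have hAeq : A = Icc 0 ts ∩ ⋂ k, {t : ℝ | g k ≠ g k₀ →
        ‖(y + t • u) - g k₀‖ ≤ ‖(y + t • u) - g k‖} := by
      ext t; simp [hAdef, Set.mem_iInter]
    rw [hAeq]
    refine isClosed_Icc.inter (isClosed_iInter fun k => ?_)
    by_cases hk : g k = g k₀
    · simp [hk]
    · simp only [hk, ne_eq, not_false_eq_true, forall_true_left]
      exact isClosed_le (hcont (g k₀)) (hcont (g k))
  set t₁ : ℝ := sSup A with ht₁def
  have ht₁A : t₁ ∈ A := hclosed.csSup_mem ⟨0, h0A⟩ hbdd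
  have hEx : ∃ k, g k ≠ g k₀ ∧ ‖(y + t₁ • u) - g k₀‖ = ‖(y + t₁ • u) - g k‖ := by
    by_contra hcon
    push_neg at hcon
    rcases eq_or_lt_of_le ht₁A.1.2 with heq | hlt
    · have hzero : ‖(y + t₁ • u) - g i‖ ^ 2 - ‖(y + t₁ • u) - g k₀‖ ^ 2 = 0 := by
        rw [hid t₁, heq, htsdef]
        field_simp
        ring
      have heqn : ‖(y + t₁ • u) - g k₀‖ = ‖(y + t₁ • u) - g i‖ :=
        (sq_eq_sq₀ (norm_nonneg _) (norm_nonneg _)).mp (by linarith)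
      exact hcon i hiv heqn
    · have hev : ∀ᶠ t in 𝓝 t₁, ∀ k, g k ≠ g k₀ →
          ‖(y + t • u) - g k₀‖ < ‖(y + t • u) - g k‖ := by
        rw [eventually_all]
        intro k
        by_cases hk : g k = g k₀
        · exact Filter.Eventually.of_forall fun t h => absurd hk h
        · have hstrict : ‖(y + t₁ • u) - g k₀‖ < ‖(y + t₁ • u) - g k‖ :=
            lt_of_le_of_ne (ht₁A.2 k hk) (hcon k hk)
          filter_upwards [((hcont (g k₀)).continuousAt).eventually_lt
            ((hcont (g k)).continuousAt) hstrict] with t ht _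
          exact ht
      rcases Metric.eventually_nhds_iff.mp hev with ⟨δ, hδ0, hδ⟩
      set t₂ : ℝ := min (t₁ + δ / 2) ts with ht₂def
      have ht₂gt : t₁ < t₂ := lt_min (by linarith) hlt
      have ht₂A : t₂ ∈ A := by
        refine ⟨⟨le_trans ht₁A.1.1 ht₂gt.le, min_le_right _ _⟩, fun k hk => ?_⟩
        have hdist : dist t₂ t₁ < δ := by
          rw [Real.dist_eq, abs_of_nonneg (by linarith)]
          have : t₂ ≤ t₁ + δ / 2 := min_le_left _ _
          linarith
        exact (hδ hdist k hk).le
      exact absurd (le_csSup hbdd ht₂A) (not_le.mpr ht₂gt)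
  obtain ⟨k, hk, hkeq⟩ := hEx
  have hSig' := hSig (y + t₁ • u) ⟨k₀, k, fun h => hk h.symm, hkeq, fun k' => by
    by_cases hk' : g k' = g k₀
    · rw [hk']
    · exact ht₁A.2 k' hk'⟩
  have hdist : dist (y + t₁ • u) y = t₁ := by
    rw [dist_eq_norm]
    have : y + t₁ • u - y = t₁ • u := by abel
    rw [this, norm_smul, hu, mul_one, Real.norm_eq_abs, abs_of_nonneg ht₁A.1.1]
  have hρt₁ : ρ ≤ t₁ := by
    by_contra h
    exact hSig' (by rw [hdist]; linarith)
  have hts : γ * ts = g0 / 2 := by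
    rw [htsdef]; field_simp
  have : γ * ρ ≤ γ * ts :=
    mul_le_mul_of_nonneg_left (le_trans hρt₁ ht₁A.1.2) hγ.le
  nlinarith

lemma proj_dist_le (a b : Zs m d) :
    dist (projY a) (projY b) ≤ dist a b ∧ dist (projX a) (projX b) ≤ dist a b := by
  have h := (WithLp.prod_lipschitzWith_ofLp 2 (Ys m) (Xs d)).dist_le_mul a b
  have h' : dist ((WithLp.equiv 2 (Ys m × Xs d)) a) ((WithLp.equiv 2 (Ys m × Xs d)) b)
      ≤ dist a b := by simpa using h
  rw [Prod.dist_eq] at h'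
  exact ⟨le_trans (le_max_left _ _) h', le_trans (le_max_right _ _) h'⟩

end Aux

set_option maxHeartbeats 1000000

/-- The joint nearest selector `P(y, x) := P_y(x)` is locally
Lipschitz on `(Y × closure K) \ ℬ`. -/
theorem statement8 {d m n : ℕ}
    (K : Set (Xs d)) (hK : IsBounded K)
    (f : Fin n → Xs d → Ys m) (hf : ∀ i, LocLipOn K (f i))
    (hext : IsLimitExtension K f)
    (P : Ys m → Xs d → Ys m) (hP : IsPrioritySelector f P) :
    LocLipOn ({p : Zs m d | projX p ∈ closure K} \ BadSet K f)
      (fun p => P (projY p) (projX p)) := by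
  intro p hp
  have hpK : projX p ∈ closure K := hp.1
  have hpB' : ¬ (projX p ∈ DSet K f ∪ closure (Unstable K f) ∨
      projY p ∈ SigmaTilde K f (projX p)) := hp.2
  push_neg at hpB'
  obtain ⟨h1, hSt⟩ := hpB'
  have hDne : projX p ∉ DSet K f := fun hd => h1 (Or.inl hd)
  set x₀ : Xs d := projX p with hx₀def
  set y₀ : Ys m := projY p with hy₀def
  obtain ⟨i0, -, -, -⟩ := hP 0 0
  have hne : Nonempty (Fin n) := ⟨i0⟩
  -- uniform Lipschitz data near x₀
  have hLipData : ∀ i : Fin n, ∃ C : NNReal, ∃ t ∈ 𝓝[closure K] x₀,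
      LipschitzOnWith C (f i) t := by
    intro i
    by_contra hcon
    exact hDne ⟨hpK, i, hcon⟩
  choose Cf tf htf hlip using hLipData
  choose rf hrf hsub using fun i => Metric.mem_nhdsWithin_iff.mp (htf i)
  set L : NNReal := Finset.univ.sup Cf with hLdef
  have hL0 : (0:ℝ) ≤ (L:ℝ) := L.coe_nonneg
  set ε₁ : ℝ := Finset.univ.inf' Finset.univ_nonempty rf with hε₁def
  have hε₁ : 0 < ε₁ := by
    rw [hε₁def, Finset.lt_inf'_iff]
    exact fun i _ => hrf i
  have hLip : ∀ i, LipschitzOnWith L (f i) (closure K ∩ Metric.ball x₀ ε₁) := by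
    intro i
    have hmono : LipschitzOnWith (Cf i) (f i) (closure K ∩ Metric.ball x₀ ε₁) := by
      refine (hlip i).mono ?_
      intro z hz
      exact hsub i ⟨Metric.mem_ball.mpr (lt_of_lt_of_le (Metric.mem_ball.mp hz.2)
        (Finset.inf'_le _ (Finset.mem_univ i))), hz.1⟩
    intro a ha b hb
    exact le_trans (hmono ha hb) (mul_le_mul_left
      (ENNReal.coe_le_coe.mpr (Finset.le_sup (Finset.mem_univ i))) _)
  have hL : ∀ (i : Fin n) (x x' : Xs d), x ∈ closure K → dist x x₀ < ε₁ →
      x' ∈ closure K → dist x' x₀ < ε₁ → dist (f i x) (f i x') ≤ (L:ℝ) * dist x x' :=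
    fun i x x' a b a' b' => (hLip i).dist_le_mul x ⟨a, Metric.mem_ball.mpr b⟩
      x' ⟨a', Metric.mem_ball.mpr b'⟩
  -- separation from the switching graph
  have hsT : (x₀, y₀) ∉ closure {q : Xs d × Ys m | q.1 ∈ K ∧ q.2 ∈ Sigma0 f q.1} := hSt
  rw [Metric.mem_closure_iff] at hsT
  push_neg at hsT
  obtain ⟨ε, hε0, hsep⟩ := hsT
  set e : ℝ := min ε ε₁ with hedef
  have he : 0 < e := lt_min hε0 hε₁
  have heε : e ≤ ε := min_le_left _ _
  have heε₁ : e ≤ ε₁ := min_le_right _ _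
  -- uniform bound on distances to branch values
  set D : ℝ := (Finset.univ.sup' Finset.univ_nonempty fun k => ‖y₀ - f k x₀‖) + e + (L:ℝ) * e
    with hDdef
  have hDbound : ∀ (y : Ys m) (x : Xs d) (k : Fin n), x ∈ closure K → dist x x₀ < e →
      dist y y₀ < e → ‖y - f k x‖ ≤ D := by
    intro y x k hxc hxd hyd
    have t1 : ‖y - f k x‖ ≤ ‖y - y₀‖ + ‖y₀ - f k x₀‖ + ‖f k x₀ - f k x‖ := by
      have : y - f k x = (y - y₀) + (y₀ - f k x₀) + (f k x₀ - f k x) := by abel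
      rw [this]
      exact norm_add₃_le
    have t2 : ‖y - y₀‖ < e := by rw [← dist_eq_norm]; exact hyd
    have t3 : ‖y₀ - f k x₀‖ ≤ Finset.univ.sup' Finset.univ_nonempty fun k => ‖y₀ - f k x₀‖ :=
      Finset.le_sup' (fun k => ‖y₀ - f k x₀‖) (Finset.mem_univ k)
    have t4 : ‖f k x₀ - f k x‖ ≤ (L:ℝ) * e := by
      rw [← dist_eq_norm]
      have h1 : dist (f k x₀) (f k x) ≤ (L:ℝ) * dist x₀ x :=
        hL k x₀ x hpK (by simpa using hε₁) hxc (lt_of_lt_of_le hxd heε₁)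
      have h2 : dist x₀ x ≤ e := by
        rw [dist_comm]
        exact le_of_lt hxd
      calc dist (f k x₀) (f k x) ≤ (L:ℝ) * dist x₀ x := h1
        _ ≤ (L:ℝ) * e := mul_le_mul_of_nonneg_left h2 hL0
    rw [hDdef]
    linarith
  have hD0 : (0:ℝ) ≤ D := le_trans (norm_nonneg _) (hDbound y₀ x₀ i0 hpK (by simpa using he)
    (by simpa using he))
  -- key estimate at interior points
  have keyK : ∀ x ∈ K, dist x x₀ < e → ∀ y : Ys m, dist y y₀ < e/2 →
      ∀ (i j : Fin n) (c : ℝ), 0 ≤ c →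
      (∀ k, ‖y - f j x‖ ≤ ‖y - f k x‖) →
      ‖y - f i x‖ ≤ ‖y - f j x‖ + c →
      ‖f i x - f j x‖ * (e/2) ≤ D * c := by
    intro x hxK hx y hy i j c hc hjmin hic
    refine key (fun k => f k x) y j hjmin (e/2) D c (by linarith) hc
      (fun k => hDbound y x k (subset_closure hxK) hx (by linarith)) ?_ i hic
    intro z hz hzlt
    have hzy₀ : dist z y₀ < e :=
      lt_of_le_of_lt (dist_triangle z y y₀) (by linarith)
    have := hsep (x, z) ⟨hxK, hz⟩
    rw [Prod.dist_eq] at this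
    have hxε : dist x₀ x < ε := by rw [dist_comm]; exact lt_of_lt_of_le hx heε
    have hzε : dist y₀ z < ε := by rw [dist_comm]; exact lt_of_lt_of_le hzy₀ heε
    exact absurd this (not_le.mpr (max_lt hxε hzε))
  -- key estimate extended to closure points
  have keyC : ∀ x ∈ closure K, dist x x₀ < e/2 → ∀ y : Ys m, dist y y₀ < e/2 →
      ∀ (i j : Fin n) (c : ℝ), 0 ≤ c →
      (∀ k, ‖y - f j x‖ ≤ ‖y - f k x‖) →
      ‖y - f i x‖ ≤ ‖y - f j x‖ + c →
      ‖f i x - f j x‖ * (e/2) ≤ D * c := by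
    intro x hxc hx y hy i j c hc hjmin hic
    refine le_of_forall_gt_imp_ge_of_dense fun b hb => ?_
    set θ : ℝ := b - D * c with hθdef
    have hθ0 : 0 < θ := by rw [hθdef]; linarith
    set δ : ℝ := min (e/4) (θ / (4*D*(L:ℝ) + (L:ℝ)*e + 1)) with hδdef
    have hden : (0:ℝ) < 4*D*(L:ℝ) + (L:ℝ)*e + 1 := by positivity
    have hδ0 : 0 < δ := lt_min (by linarith) (div_pos hθ0 hden)
    have hLδ0 : (0:ℝ) ≤ 2*((L:ℝ)*δ) := by nlinarith
    have hδe : δ ≤ e/4 := min_le_left _ _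
    obtain ⟨x', hx'K, hx'd⟩ := Metric.mem_closure_iff.mp hxc δ hδ0
    have hxx' : dist x x' < δ := hx'd
    have hx'x₀ : dist x' x₀ < e := by
      have := dist_triangle x' x x₀
      rw [dist_comm x' x] at this
      linarith
    have hmove : ∀ k, ‖f k x - f k x'‖ ≤ (L:ℝ) * δ := by
      intro k
      rw [← dist_eq_norm]
      calc dist (f k x) (f k x') ≤ (L:ℝ) * dist x x' :=
            hL k x x' hxc (by linarith) (subset_closure hx'K)
              (lt_of_lt_of_le hx'x₀ heε₁)
        _ ≤ (L:ℝ) * δ := mul_le_mul_of_nonneg_left hxx'.le hL0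
    have tri : ∀ a b c : Ys m, ‖a - c‖ ≤ ‖a - b‖ + ‖b - c‖ := fun a b c => by
      simpa [dist_eq_norm] using dist_triangle a b c
    obtain ⟨j', hj'⟩ := Finite.exists_min fun k => ‖y - f k x'‖
    -- near-minimality transfers to x'
    have hnm1 : ‖y - f j x'‖ ≤ ‖y - f j' x'‖ + 2*((L:ℝ)*δ) := by
      have a1 : ‖y - f j x'‖ ≤ ‖y - f j x‖ + ‖f j x - f j x'‖ := tri _ _ _
      have a2 : ‖y - f j' x‖ ≤ ‖y - f j' x'‖ + ‖f j' x' - f j' x‖ := tri _ _ _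
      have a3 : ‖f j' x' - f j' x‖ = ‖f j' x - f j' x'‖ := norm_sub_rev _ _
      have a4 := hjmin j'
      linarith [hmove j, hmove j']
    have hnm2 : ‖y - f i x'‖ ≤ ‖y - f j' x'‖ + (c + 2*((L:ℝ)*δ)) := by
      have a1 : ‖y - f i x'‖ ≤ ‖y - f i x‖ + ‖f i x - f i x'‖ := tri _ _ _
      have a2 : ‖y - f j' x‖ ≤ ‖y - f j' x'‖ + ‖f j' x' - f j' x‖ := tri _ _ _
      have a3 : ‖f j' x' - f j' x‖ = ‖f j' x - f j' x'‖ := norm_sub_rev _ _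
      have a4 := hjmin j'
      linarith [hmove i, hmove j']
    have K1 : ‖f j x' - f j' x'‖ * (e/2) ≤ D * (2*((L:ℝ)*δ)) :=
      keyK x' hx'K hx'x₀ y hy j j' (2*((L:ℝ)*δ)) hLδ0 hj' hnm1
    have K2 : ‖f i x' - f j' x'‖ * (e/2) ≤ D * (c + 2*((L:ℝ)*δ)) :=
      keyK x' hx'K hx'x₀ y hy i j' (c + 2*((L:ℝ)*δ)) (by linarith) hj' hnm2
    have K3 : ‖f i x' - f j x'‖ ≤ ‖f i x' - f j' x'‖ + ‖f j x' - f j' x'‖ := by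
      have := tri (f i x') (f j' x') (f j x')
      rw [norm_sub_rev (f j' x') (f j x')] at this
      exact this
    have K4 : ‖f i x - f j x‖ ≤ ‖f i x' - f j x'‖ + 2*((L:ℝ)*δ) := by
      have a1 : ‖f i x - f j x‖ ≤ ‖f i x - f i x'‖ + ‖f i x' - f j x‖ := tri _ _ _
      have a2 : ‖f i x' - f j x‖ ≤ ‖f i x' - f j x'‖ + ‖f j x' - f j x‖ := tri _ _ _
      have a3 : ‖f j x' - f j x‖ = ‖f j x - f j x'‖ := norm_sub_rev _ _
      linarith [hmove i, hmove j]
    have hδθ : δ * (4*D*(L:ℝ) + (L:ℝ)*e) ≤ θ := by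
      have h1 : δ ≤ θ / (4*D*(L:ℝ) + (L:ℝ)*e + 1) := min_le_right _ _
      rw [le_div_iff₀ hden] at h1
      nlinarith
    have he2 : (0:ℝ) < e/2 := by linarith
    have M4 := mul_le_mul_of_nonneg_right K4 he2.le
    have M3 := mul_le_mul_of_nonneg_right K3 he2.le
    clear_value L ε₁ e D θ δ
    linarith [M4, M3, K1, K2, hδθ]
  -- assemble the Lipschitz bound
  set Creal : ℝ := (L:ℝ) + 4*D*((L:ℝ)+1)/e with hCdef
  refine ⟨Real.toNNReal Creal,
    ({q : Zs m d | projX q ∈ closure K} \ BadSet K f) ∩ Metric.ball p (e/8),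
    Filter.inter_mem self_mem_nhdsWithin
      (mem_nhdsWithin_of_mem_nhds (Metric.ball_mem_nhds p (by linarith))), ?_⟩
  rw [lipschitzOnWith_iff_dist_le_mul]
  intro q hq q' hq'
  have hxc : projX q ∈ closure K := hq.1.1
  have hx'c : projX q' ∈ closure K := hq'.1.1
  have hqp : dist q p < e/8 := Metric.mem_ball.mp hq.2
  have hq'p : dist q' p < e/8 := Metric.mem_ball.mp hq'.2
  have hpr1 := proj_dist_le q p
  have hpr2 := proj_dist_le q' p
  have hpr3 := proj_dist_le q q'
  have hxx₀ : dist (projX q) x₀ < e/8 := lt_of_le_of_lt hpr1.2 hqp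
  have hyy₀ : dist (projY q) y₀ < e/8 := lt_of_le_of_lt hpr1.1 hqp
  have hx'x₀ : dist (projX q') x₀ < e/8 := lt_of_le_of_lt hpr2.2 hq'p
  have hy'y₀ : dist (projY q') y₀ < e/8 := lt_of_le_of_lt hpr2.1 hq'p
  set x : Xs d := projX q
  set y : Ys m := projY q
  set x' : Xs d := projX q'
  set y' : Ys m := projY q'
  set dq : ℝ := dist q q' with hdqdef
  have hdq0 : 0 ≤ dq := dist_nonneg
  have hxx' : dist x x' ≤ dq := hpr3.2
  have hyy' : dist y y' ≤ dq := hpr3.1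
  obtain ⟨j, hPj, hjmin, -⟩ := hP y x
  obtain ⟨k, hPk, hkmin, -⟩ := hP y' x'
  show dist (P y x) (P y' x') ≤ _
  rw [hPj, hPk]
  have tri : ∀ a b c : Ys m, ‖a - c‖ ≤ ‖a - b‖ + ‖b - c‖ := fun a b c => by
    simpa [dist_eq_norm] using dist_triangle a b c
  have hmove : ∀ i : Fin n, ‖f i x - f i x'‖ ≤ (L:ℝ) * dq := by
    intro i
    rw [← dist_eq_norm]
    calc dist (f i x) (f i x') ≤ (L:ℝ) * dist x x' :=
          hL i x x' hxc (by linarith [lt_of_lt_of_le (by linarith : dist x x₀ < e) heε₁])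
            hx'c (by linarith [lt_of_lt_of_le (by linarith : dist x' x₀ < e) heε₁])
      _ ≤ (L:ℝ) * dq := mul_le_mul_of_nonneg_left hxx' hL0
  have hnm : ‖y' - f j x'‖ ≤ ‖y' - f k x'‖ + 2*((L:ℝ)+1)*dq := by
    have a1 : ‖y' - f j x'‖ ≤ ‖y' - y‖ + ‖y - f j x'‖ := tri _ _ _
    have a2 : ‖y - f j x'‖ ≤ ‖y - f j x‖ + ‖f j x - f j x'‖ := tri _ _ _
    have a3 : ‖y - f k x‖ ≤ ‖y - y'‖ + ‖y' - f k x‖ := tri _ _ _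
    have a4 : ‖y' - f k x‖ ≤ ‖y' - f k x'‖ + ‖f k x' - f k x‖ := tri _ _ _
    have a5 : ‖f k x' - f k x‖ = ‖f k x - f k x'‖ := norm_sub_rev _ _
    have a6 : ‖y' - y‖ = ‖y - y'‖ := norm_sub_rev _ _
    have a7 : ‖y - y'‖ ≤ dq := by rw [← dist_eq_norm]; exact hyy'
    have a8 := hjmin k
    linarith [hmove j, hmove k]
  have hkey := keyC x' hx'c (by linarith) y' (by linarith) j k (2*((L:ℝ)+1)*dq)
    (mul_nonneg (by linarith) hdq0) hkmin hnm
  have hb2 : ‖f j x' - f k x'‖ ≤ 4*D*((L:ℝ)+1)/e * dq := by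
    have h2 : ‖f j x' - f k x'‖ * e ≤ 4*D*((L:ℝ)+1)*dq := by
      generalize hΔ : ‖f j x' - f k x'‖ = Δ at hkey ⊢
      clear_value e D dq
      linarith [hkey]
    rw [div_mul_eq_mul_div, le_div_iff₀ he]
    exact h2
  have hfinal : dist (f j x) (f k x') ≤ Creal * dq := by
    have t1 : dist (f j x) (f k x') ≤ ‖f j x - f j x'‖ + ‖f j x' - f k x'‖ := by
      rw [dist_eq_norm]
      exact tri _ _ _
    rw [hCdef, add_mul]
    linarith [hmove j, t1, hb2]
  calc dist (f j x) (f k x') ≤ Creal * dq := hfinal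
    _ ≤ (Real.toNNReal Creal : ℝ) * dq := by
        rw [Real.coe_toNNReal']
        exact mul_le_mul_of_nonneg_right (le_max_left _ _) hdq0


end Bif
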